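/- Let V be an m-dimensional real inner product space, let a : V × V → ℝ be a symmetric bilinear form, and let w₁,…,w_m be an orthonormal basis of V together with real numbers μ₁,…,μ_m such that a(w_i,φ) = -μ_i⟨w_i,φ⟩ for every φ ∈ V and every i. Let ℓ : V → ℝ be a linear functional, let λ be a real number with λ ≠ μ_i for all i, and let u_G ∈ V satisfy a(u_G,φ) + λ⟨u_G,φ⟩ = ℓ(φ) for all φ ∈ V. Then ℓ(u_G) = Σ_{i=1}^m ℓ(w_i)² / (λ - μ_i). -/

import Mathlib

open scoped RealInnerProductSpace

/-- Pole–residue representation of the Galerkin transfer function: if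
`(w_i, μ_i)` are orthonormal Galerkin eigenpairs of the symmetric bilinear form `a`, and
`u_G` solves `a(u_G,φ) + λ⟨u_G,φ⟩ = ℓ(φ)` for all `φ`, with `λ ≠ μ_i` for all `i`, then
`ℓ(u_G) = Σ_i ℓ(w_i)² / (λ - μ_i)`. -/
theorem galerkin_transfer_pole_residue
    {V : Type*} [NormedAddCommGroup V] [InnerProductSpace ℝ V] {m : ℕ}
    (a : V →ₗ[ℝ] V →ₗ[ℝ] ℝ) (hsym : ∀ x y : V, a x y = a y x)
    (w : OrthonormalBasis (Fin m) ℝ V) (μ : Fin m → ℝ)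
    (heig : ∀ i : Fin m, ∀ φ : V, a (w i) φ = -(μ i) * ⟪w i, φ⟫)
    (l : V →ₗ[ℝ] ℝ) (lam : ℝ) (hlam : ∀ i, lam ≠ μ i)
    (uG : V) (hG : ∀ φ : V, a uG φ + lam * ⟪uG, φ⟫ = l φ) :
    l uG = ∑ i : Fin m, (l (w i)) ^ 2 / (lam - μ i) := by
  have key : ∀ i, ⟪w i, uG⟫ = l (w i) / (lam - μ i) := by
    intro i
    have h := hG (w i)
    rw [hsym uG (w i), heig i uG, real_inner_comm uG (w i)] at h
    have hne : lam - μ i ≠ 0 := sub_ne_zero.mpr (hlam i)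
    rw [real_inner_comm]
    field_simp
    linear_combination h
  have huG : uG = ∑ i, ⟪w i, uG⟫ • w i := by
    conv_lhs => rw [← w.sum_repr uG]
    simp [OrthonormalBasis.repr_apply_apply]
  conv_lhs => rw [huG]
  rw [map_sum]
  refine Finset.sum_congr rfl fun i _ => ?_
  rw [map_smul, smul_eq_mul, key i]
  have hne : lam - μ i ≠ 0 := sub_ne_zero.mpr (hlam i)
  field_simp
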